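/- Let P be a polynomial in n complex variables that is nonvanishing on the open right half-plane product H^n (where H = {z : Re z > 0}), and let λ_1,…,λ_n be nonnegative reals. Then the polynomial ∑_i λ_i ∂P/∂x_i is either identically zero or nonvanishing on H^n. -/

import Mathlib

open Polynomial

noncomputable def Phi {n : ℕ} (l : Fin n → ℝ) :
    MvPolynomial (Fin n) ℂ →ₐ[ℂ] Polynomial (MvPolynomial (Fin n) ℂ) :=
  MvPolynomial.aeval (fun i => Polynomial.C (MvPolynomial.X i) +
    Polynomial.C (MvPolynomial.C (l i : ℂ)) * Polynomial.X)

lemma phi_eval {n : ℕ} (l : Fin n → ℝ) (z : Fin n → ℂ) (t : ℂ) (P : MvPolynomial (Fin n) ℂ) :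
    Polynomial.eval t (Polynomial.map (MvPolynomial.eval z) (Phi l P)) =
      MvPolynomial.eval (fun i => z i + (l i : ℂ) * t) P := by
  have : ((Polynomial.evalRingHom t).comp ((Polynomial.mapRingHom (MvPolynomial.eval z)).comp
      (Phi l).toRingHom)) P = (MvPolynomial.eval (fun i => z i + (l i : ℂ) * t)) P := by
    congr 1
    apply MvPolynomial.ringHom_ext
    · intro a; simp [Phi]
    · intro i; simp [Phi]
  simpa using this

lemma line_eval {n : ℕ} (x0 v : Fin n → ℂ) (σ : ℂ) (c : MvPolynomial (Fin n) ℂ) :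
    Polynomial.eval σ (MvPolynomial.aeval
      (fun i => Polynomial.C (x0 i) + Polynomial.C (v i) * Polynomial.X) c) =
      MvPolynomial.eval (fun i => x0 i + v i * σ) c := by
  have : ((Polynomial.evalRingHom σ).comp (MvPolynomial.aeval
      (fun i => Polynomial.C (x0 i) + Polynomial.C (v i) * Polynomial.X)).toRingHom) c =
      (MvPolynomial.eval (fun i => x0 i + v i * σ)) c := by
    congr 1
    apply MvPolynomial.ringHom_ext
    · intro a; simp
    · intro i; simp
  simpa using this

lemma phi_derivative {n : ℕ} (l : Fin n → ℝ) (P : MvPolynomial (Fin n) ℂ) :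
    Polynomial.derivative (Phi l P) = Phi l (∑ i, (l i : ℂ) • MvPolynomial.pderiv i P) := by
  induction P using MvPolynomial.induction_on with
  | C a => simp [Phi]
  | add p q hp hq =>
      simp only [map_add, hp, hq, smul_add, Finset.sum_add_distrib]
  | mul_X p j hp =>
      have hX : Phi l (MvPolynomial.X j) = Polynomial.C (MvPolynomial.X j) +
          Polynomial.C (MvPolynomial.C (l j : ℂ)) * Polynomial.X := by simp [Phi]
      have hpd : (∑ i, (l i : ℂ) • MvPolynomial.pderiv i (p * MvPolynomial.X j)) =
          (∑ i, (l i : ℂ) • MvPolynomial.pderiv i p) * MvPolynomial.X j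
            + MvPolynomial.C (l j : ℂ) * p := by
        have h1 : ∀ i : Fin n, (l i : ℂ) • MvPolynomial.pderiv i (p * MvPolynomial.X j) =
            ((l i : ℂ) • MvPolynomial.pderiv i p) * MvPolynomial.X j
              + (if i = j then MvPolynomial.C (l j : ℂ) * p else 0) := by
          intro i
          rw [MvPolynomial.pderiv_mul]
          by_cases h : i = j
          · subst h
            rw [MvPolynomial.pderiv_X_self, mul_one, smul_add, smul_mul_assoc, if_pos rfl]
            simp only [MvPolynomial.smul_eq_C_mul]
          · rw [MvPolynomial.pderiv_X, Pi.single_eq_of_ne (Ne.symm h), mul_zero, add_zero,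
              smul_mul_assoc, if_neg h, add_zero]
        rw [Finset.sum_congr rfl (fun i _ => h1 i), Finset.sum_add_distrib, ← Finset.sum_mul,
          Finset.sum_ite_eq' Finset.univ j, if_pos (Finset.mem_univ j)]
      rw [map_mul, derivative_mul, hp, hpd, map_add, map_mul, map_mul]
      have hC : Phi l (MvPolynomial.C ((l j : ℂ))) = Polynomial.C (MvPolynomial.C (l j : ℂ)) := by
        simp [Phi]
      rw [hC, hX]
      simp only [derivative_add, derivative_C, derivative_mul, derivative_X, zero_add, mul_one,
        derivative_C_mul]
      ring

lemma phi_eval_zero {n : ℕ} (l : Fin n → ℝ) (c : MvPolynomial (Fin n) ℂ) :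
    Polynomial.eval 0 (Phi l c) = c := by
  have : ((Polynomial.evalRingHom 0).comp (Phi l).toRingHom) c = (RingHom.id _) c := by
    congr 1
    apply MvPolynomial.ringHom_ext
    · intro a; simp [Phi]
    · intro i; simp [Phi]
  simpa using this

lemma phi_coeff_one {n : ℕ} (l : Fin n → ℝ) (P : MvPolynomial (Fin n) ℂ) :
    (Phi l P).coeff 1 = ∑ i, (l i : ℂ) • MvPolynomial.pderiv i P := by
  have h := phi_derivative l P
  have h0 : (Polynomial.derivative (Phi l P)).coeff 0 = (Phi l P).coeff 1 := by
    rw [Polynomial.coeff_derivative]; push_cast; ring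
  rw [← h0, h, Polynomial.coeff_zero_eq_eval_zero, phi_eval_zero]

lemma multiset_logderiv (s : Multiset ℂ) (hs : ∀ r ∈ s, r.re < 0) :
    ((s.map (fun r => X - Polynomial.C r)).prod.coeff 0 ≠ 0) ∧
    (0 ≤ ((s.map (fun r => X - Polynomial.C r)).prod.coeff 1 /
      (s.map (fun r => X - Polynomial.C r)).prod.coeff 0).re) ∧
    (s ≠ 0 → 0 < ((s.map (fun r => X - Polynomial.C r)).prod.coeff 1 /
      (s.map (fun r => X - Polynomial.C r)).prod.coeff 0).re) := by
  induction s using Multiset.induction with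
  | empty => simp [Polynomial.coeff_one]
  | cons r s ih =>
      have hr : r.re < 0 := hs r (Multiset.mem_cons_self r s)
      have hr0 : r ≠ 0 := by
        intro h; rw [h] at hr; simp at hr
      obtain ⟨ih0, ih1, _⟩ := ih (fun x hx => hs x (Multiset.mem_cons_of_mem hx))
      set q := (s.map (fun r => X - Polynomial.C r)).prod with hq
      have hprod : ((r ::ₘ s).map (fun r => X - Polynomial.C r)).prod
          = (X - Polynomial.C r) * q := by
        rw [Multiset.map_cons, Multiset.prod_cons]
      rw [hprod]
      set a := q.coeff 0 with ha
      set b := q.coeff 1 with hb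
      have hc0 : ((X - Polynomial.C r) * q).coeff 0 = -r * a := by
        rw [Polynomial.mul_coeff_zero, Polynomial.coeff_sub, Polynomial.coeff_X_zero,
          Polynomial.coeff_C_zero, zero_sub]
      have hc1 : ((X - Polynomial.C r) * q).coeff 1 = a - r * b := by
        rw [sub_mul, Polynomial.coeff_sub, Polynomial.coeff_X_mul, Polynomial.coeff_C_mul]
      have hratio : ((X - Polynomial.C r) * q).coeff 1 / ((X - Polynomial.C r) * q).coeff 0
          = -r⁻¹ + b / a := by
        rw [hc0, hc1]
        field_simp
        ring
      have hinv : 0 < (-r⁻¹).re := by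
        rw [Complex.neg_re, Complex.inv_re]
        have : 0 < Complex.normSq r := Complex.normSq_pos.mpr hr0
        rw [neg_pos]
        exact div_neg_of_neg_of_pos hr this
      have hre : 0 < (((X - Polynomial.C r) * q).coeff 1
          / ((X - Polynomial.C r) * q).coeff 0).re := by
        rw [hratio, Complex.add_re]
        have := ih1
        linarith
      exact ⟨by rw [hc0]; exact mul_ne_zero (neg_ne_zero.mpr hr0) ih0, le_of_lt hre,
        fun _ => hre⟩

lemma coeff_one_ne_zero (p : Polynomial ℂ) (hp : p ≠ 0) (hd : 1 ≤ p.natDegree)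
    (hroots : ∀ r : ℂ, p.IsRoot r → r.re < 0) : p.coeff 1 ≠ 0 := by
  have hsplit : Splits p := IsAlgClosed.splits p
  have heq := hsplit.eq_prod_roots
  have hs : ∀ r ∈ p.roots, r.re < 0 := by
    intro r hr
    exact hroots r (Polynomial.isRoot_of_mem_roots hr)
  obtain ⟨h0, _, h2⟩ := multiset_logderiv p.roots hs
  have hcard : p.roots ≠ 0 := by
    have : p.natDegree = p.roots.card := by
      have := hsplit.natDegree_eq_card_roots
      simpa using this
    intro h
    rw [h] at this
    simp at this
    omega
  have hratio := h2 hcard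
  have hne : (p.roots.map (fun r => X - Polynomial.C r)).prod.coeff 1 ≠ 0 := by
    intro h
    rw [h] at hratio
    simp at hratio
  have hlc : p.leadingCoeff ≠ 0 := leadingCoeff_ne_zero.mpr hp
  rw [heq, Polynomial.coeff_C_mul]
  exact mul_ne_zero hlc hne

lemma norm_mprod (s : Multiset ℂ) : ‖s.prod‖ = (s.map (fun z => ‖z‖)).prod := by
  induction s using Multiset.induction with
  | empty => simp
  | cons a s ih => simp [norm_mul, ih]

lemma multiset_ratio (σs : ℂ) (ρ : ℝ) (hρ : 0 < ρ) (s : Multiset ℂ)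
    (hs : ∀ r ∈ s, ρ ≤ ‖r‖) :
    (s.map (fun r => ‖σs - r‖)).prod ≤
      (1 + ‖σs‖ / ρ) ^ (Multiset.card s) * (s.map (fun r => ‖r‖)).prod := by
  induction s using Multiset.induction with
  | empty => simp
  | cons r s ih =>
      have hr : ρ ≤ ‖r‖ := hs r (Multiset.mem_cons_self r s)
      have ih' := ih (fun x hx => hs x (Multiset.mem_cons_of_mem hx))
      simp only [Multiset.map_cons, Multiset.prod_cons, Multiset.card_cons]
      have h1 : ‖σs - r‖ ≤ (1 + ‖σs‖ / ρ) * ‖r‖ := by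
        have h2 : ‖σs - r‖ ≤ ‖σs‖ + ‖r‖ := norm_sub_le _ _
        have h3 : ‖σs‖ ≤ (‖σs‖ / ρ) * ‖r‖ := by
          calc ‖σs‖ = (‖σs‖ / ρ) * ρ := by field_simp
          _ ≤ (‖σs‖ / ρ) * ‖r‖ := by
              apply mul_le_mul_of_nonneg_left hr (by positivity)
        calc ‖σs - r‖ ≤ ‖σs‖ + ‖r‖ := h2
        _ ≤ (‖σs‖ / ρ) * ‖r‖ + ‖r‖ := by linarith
        _ = (1 + ‖σs‖ / ρ) * ‖r‖ := by ring
      calc ‖σs - r‖ * (s.map (fun r => ‖σs - r‖)).prod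
          ≤ ((1 + ‖σs‖ / ρ) * ‖r‖) * ((1 + ‖σs‖ / ρ) ^ (Multiset.card s)
            * (s.map (fun r => ‖r‖)).prod) := by
            apply mul_le_mul h1 ih' (Multiset.prod_nonneg ?_) (by positivity)
            intro x hx
            obtain ⟨y, _, rfl⟩ := Multiset.mem_map.mp hx
            positivity
        _ = (1 + ‖σs‖ / ρ) ^ (Multiset.card s + 1) * (‖r‖ * (s.map (fun r => ‖r‖)).prod) := by
            ring

lemma ratio_bound (f : Polynomial ℂ) (ρ : ℝ) (hρ : 0 < ρ)
    (hf : ∀ σ : ℂ, ‖σ‖ ≤ ρ → Polynomial.eval σ f ≠ 0) (σs : ℂ) :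
    ‖f.eval σs‖ ≤ (1 + ‖σs‖ / ρ) ^ f.natDegree * ‖f.eval 0‖ := by
  have hf0 : f ≠ 0 := by
    intro h
    exact hf 0 (by simpa using le_of_lt hρ) (by simp [h])
  have hsplit : Splits f := IsAlgClosed.splits f
  have heq := hsplit.eq_prod_roots
  have hroots : ∀ r ∈ f.roots, ρ ≤ ‖r‖ := by
    intro r hr
    by_contra h
    exact hf r (le_of_lt (not_le.mp h)) (Polynomial.isRoot_of_mem_roots hr)
  have hcard : Multiset.card f.roots = f.natDegree := by
    have := hsplit.natDegree_eq_card_roots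
    simpa using this.symm
  have heval : ∀ t : ℂ, f.eval t = f.leadingCoeff * ((f.roots.map (fun r => t - r)).prod) := by
    intro t
    conv_lhs => rw [heq]
    rw [Polynomial.eval_mul, Polynomial.eval_C, Polynomial.eval_multiset_prod]
    congr 2
    rw [Multiset.map_map]
    congr 1
    funext r
    simp
  have hnorm : ∀ t : ℂ, ‖f.eval t‖
      = ‖f.leadingCoeff‖ * ((f.roots.map (fun r => ‖t - r‖)).prod) := by
    intro t
    rw [heval t, norm_mul, norm_mprod, Multiset.map_map]
    rfl
  rw [hnorm σs, hnorm 0]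
  have key := multiset_ratio σs ρ hρ f.roots hroots
  rw [hcard] at key
  have h0 : (f.roots.map (fun r => ‖(0:ℂ) - r‖)).prod = (f.roots.map (fun r => ‖r‖)).prod := by
    congr 1
    apply Multiset.map_congr rfl
    intro r _
    simp
  rw [h0]
  calc ‖f.leadingCoeff‖ * (f.roots.map (fun r => ‖σs - r‖)).prod
      ≤ ‖f.leadingCoeff‖ * ((1 + ‖σs‖ / ρ) ^ f.natDegree
          * (f.roots.map (fun r => ‖r‖)).prod) := by
        exact mul_le_mul_of_nonneg_left key (norm_nonneg _)
    _ = (1 + ‖σs‖ / ρ) ^ f.natDegree * (‖f.leadingCoeff‖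
          * (f.roots.map (fun r => ‖r‖)).prod) := by
        ring

theorem stmt4 {n : ℕ} (P : MvPolynomial (Fin n) ℂ)
    (hP : ∀ x : Fin n → ℂ, (∀ i, 0 < (x i).re) → MvPolynomial.eval x P ≠ 0)
    (l : Fin n → ℝ) (hl : ∀ i, 0 ≤ l i) :
    (∑ i, (l i : ℂ) • MvPolynomial.pderiv i P) = 0 ∨
      ∀ x : Fin n → ℂ, (∀ i, 0 < (x i).re) →
        MvPolynomial.eval x (∑ i, (l i : ℂ) • MvPolynomial.pderiv i P) ≠ 0 := by
  by_cases hQ : (∑ i, (l i : ℂ) • MvPolynomial.pderiv i P) = 0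
  · exact Or.inl hQ
  right
  intro x0 hx0
  set Q : MvPolynomial (Fin n) ℂ := ∑ i, (l i : ℂ) • MvPolynomial.pderiv i P with hQdef
  set p : Polynomial ℂ := Polynomial.map (MvPolynomial.eval x0) (Phi l P) with hpdef
  have hpeval : ∀ t : ℂ, p.eval t = MvPolynomial.eval (fun i => x0 i + (l i : ℂ) * t) P :=
    fun t => phi_eval l x0 t P
  have hp0 : p.eval 0 ≠ 0 := by
    rw [hpeval]
    have hfun : (fun i => x0 i + (l i : ℂ) * 0) = x0 := by funext i; ring
    rw [hfun]; exact hP x0 hx0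
  have hpne : p ≠ 0 := fun h => hp0 (by simp [h])
  have hcoeffQ : p.coeff 1 = MvPolynomial.eval x0 Q := by
    rw [hpdef, Polynomial.coeff_map, phi_coeff_one]
  rw [← hcoeffQ]
  by_cases hdeg : 1 ≤ p.natDegree
  · -- main case: the slice polynomial is nonconstant
    apply coeff_one_ne_zero p hpne hdeg
    intro r hr
    by_contra hre
    push_neg at hre
    apply hP (fun i => x0 i + (l i : ℂ) * r)
    · intro i
      have : ((l i : ℂ) * r).re = l i * r.re := Complex.re_ofReal_mul _ _
      simp only [Complex.add_re, this]
      have := mul_nonneg (hl i) hre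
      have := hx0 i
      linarith
    · rw [← hpeval]; exact hr
  · -- degenerate case: slice polynomial constant; derive a contradiction
    exfalso
    push_neg at hdeg
    have hdeg0 : p.natDegree = 0 := by omega
    set d := (Phi l P).natDegree with hd
    have hc1 : (Phi l P).coeff 1 = Q := phi_coeff_one l P
    have hd1 : 1 ≤ d := Polynomial.le_natDegree_of_ne_zero (by rw [hc1]; exact hQ)
    have hPhine : Phi l P ≠ 0 := by
      intro h
      apply hQ
      rw [← hc1, h, Polynomial.coeff_zero]
    have hcd : (Phi l P).coeff d ≠ 0 := by
      have := Polynomial.leadingCoeff_ne_zero.mpr hPhine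
      rwa [Polynomial.leadingCoeff] at this
    have hcdx0 : MvPolynomial.eval x0 ((Phi l P).coeff d) = 0 := by
      have h1 : p.coeff d = 0 := Polynomial.coeff_eq_zero_of_natDegree_lt (by omega)
      rw [hpdef, Polynomial.coeff_map] at h1
      exact h1
    have hx1 : ∃ x1 : Fin n → ℂ, MvPolynomial.eval x1 ((Phi l P).coeff d) ≠ 0 := by
      by_contra h
      push_neg at h
      exact hcd (MvPolynomial.funext (fun x => by rw [h x, map_zero]))
    obtain ⟨x1, hx1⟩ := hx1
    set v : Fin n → ℂ := fun i => x1 i - x0 i with hv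
    set L : MvPolynomial (Fin n) ℂ → Polynomial ℂ := fun c => MvPolynomial.aeval
      (fun i => Polynomial.C (x0 i) + Polynomial.C (v i) * Polynomial.X) c with hLdef
    have hL : ∀ (c : MvPolynomial (Fin n) ℂ) (σ : ℂ),
        (L c).eval σ = MvPolynomial.eval (fun i => x0 i + v i * σ) c :=
      fun c σ => line_eval x0 v σ c
    -- choose the radius ρ
    have hUopen : IsOpen {σ : ℂ | ∀ i, 0 < (x0 i + v i * σ).re} := by
      have hU : {σ : ℂ | ∀ i, 0 < (x0 i + v i * σ).re}
          = ⋂ i, {σ : ℂ | 0 < (x0 i + v i * σ).re} := by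
        ext σ; simp [Set.mem_iInter]
      rw [hU]
      apply isOpen_iInter_of_finite
      intro i
      have hcont : Continuous fun σ : ℂ => (x0 i + v i * σ).re :=
        Complex.continuous_re.comp (by continuity)
      exact isOpen_lt continuous_const hcont
    have h0U : (0 : ℂ) ∈ {σ : ℂ | ∀ i, 0 < (x0 i + v i * σ).re} := by
      intro i; simpa using hx0 i
    obtain ⟨ε, hε, hball⟩ := Metric.isOpen_iff.mp hUopen 0 h0U
    set ρ := ε / 2 with hρdef
    have hρ : 0 < ρ := by positivity
    have hρU : ∀ σ : ℂ, ‖σ‖ ≤ ρ → ∀ i, 0 < (x0 i + v i * σ).re := by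
      intro σ hσ
      apply hball
      rw [Metric.mem_ball, dist_zero_right]
      have : ρ < ε := by rw [hρdef]; linarith
      linarith
    -- choose the comparison point σs on the real axis
    have hLcd_ne : L ((Phi l P).coeff d) ≠ 0 := by
      intro h
      apply hx1
      have h1 := hL ((Phi l P).coeff d) 1
      rw [h] at h1
      simp only [Polynomial.eval_zero] at h1
      have hfun : (fun i => x0 i + v i * 1) = x1 := by
        funext i; rw [hv]; ring
      rw [hfun] at h1
      exact h1.symm
    have hfin : {t : ℝ | Polynomial.IsRoot (L ((Phi l P).coeff d)) (t : ℂ)}.Finite := by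
      have := Polynomial.finite_setOf_isRoot hLcd_ne
      exact this.preimage (Complex.ofReal_injective.injOn)
    have hne : ((Set.Ioc (0:ℝ) ρ) \
        {t : ℝ | Polynomial.IsRoot (L ((Phi l P).coeff d)) (t : ℂ)}).Nonempty :=
      ((Set.Ioc_infinite hρ).diff hfin).nonempty
    obtain ⟨ts, htmem, htroot⟩ := hne
    set σs : ℂ := (ts : ℂ) with hσsdef
    have hts0 : 0 < ts := htmem.1
    have hσsρ : ‖σs‖ ≤ ρ := by
      rw [hσsdef, Complex.norm_real, Real.norm_eq_abs, abs_of_pos hts0]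
      exact htmem.2
    have hbd : MvPolynomial.eval (fun i => x0 i + v i * σs) ((Phi l P).coeff d) ≠ 0 := by
      rw [← hL]
      exact htroot
    -- degree bound and constant
    set M := (Finset.range (d + 1)).sup (fun k => (L ((Phi l P).coeff k)).natDegree) with hM
    set K := (1 + ‖σs‖ / ρ) ^ M with hK
    have hbase : 1 ≤ 1 + ‖σs‖ / ρ := le_add_of_nonneg_right (by positivity)
    -- the family of polynomials κ w
    set κ : ℂ → Polynomial ℂ := fun w => ∑ k ∈ Finset.range (d + 1),
      w ^ (d - k) • L ((Phi l P).coeff k) with hκ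
    have hκdeg : ∀ w : ℂ, (κ w).natDegree ≤ M := by
      intro w
      apply Polynomial.natDegree_sum_le_of_forall_le
      intro k hk
      exact (Polynomial.natDegree_smul_le _ _).trans
        (Finset.le_sup (f := fun k => (L (((Phi l) P).coeff k)).natDegree) hk)
    have hκeval : ∀ w σ : ℂ, (κ w).eval σ = ∑ k ∈ Finset.range (d + 1),
        w ^ (d - k) * MvPolynomial.eval (fun i => x0 i + v i * σ) ((Phi l P).coeff k) := by
      intro w σ
      rw [hκ]
      rw [Polynomial.eval_finset_sum]
      apply Finset.sum_congr rfl
      intro k hk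
      rw [Polynomial.eval_smul, hL, smul_eq_mul]
    -- κ w is nonvanishing on the disc when Re w > 0
    have hκne : ∀ w : ℂ, 0 < w.re → ∀ σ : ℂ, ‖σ‖ ≤ ρ → (κ w).eval σ ≠ 0 := by
      intro w hw σ hσ
      have hw0 : w ≠ 0 := by
        intro h; rw [h] at hw; simp at hw
      set z : Fin n → ℂ := fun i => x0 i + v i * σ with hz
      have hpz : (Polynomial.map (MvPolynomial.eval z) (Phi l P)).natDegree < d + 1 :=
        Nat.lt_succ_of_le Polynomial.natDegree_map_le
      have hevalz : MvPolynomial.eval (fun i => z i + (l i : ℂ) * w⁻¹) P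
          = ∑ k ∈ Finset.range (d + 1),
            MvPolynomial.eval z ((Phi l P).coeff k) * (w⁻¹) ^ k := by
        rw [← phi_eval l z w⁻¹ P, Polynomial.eval_eq_sum_range' hpz]
        apply Finset.sum_congr rfl
        intro k _
        rw [Polynomial.coeff_map]
      have hκw : (κ w).eval σ
          = w ^ d * MvPolynomial.eval (fun i => z i + (l i : ℂ) * w⁻¹) P := by
        rw [hκeval, hevalz, Finset.mul_sum]
        apply Finset.sum_congr rfl
        intro k hk
        have hkd : k ≤ d := Nat.lt_succ_iff.mp (Finset.mem_range.mp hk)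
        rw [pow_sub₀ w hw0 hkd, inv_pow]
        ring
      rw [hκw]
      apply mul_ne_zero (pow_ne_zero _ hw0)
      apply hP
      intro i
      have h1 : 0 < (z i).re := hρU σ hσ i
      have h2 : 0 ≤ ((l i : ℂ) * w⁻¹).re := by
        rw [Complex.re_ofReal_mul]
        apply mul_nonneg (hl i)
        rw [Complex.inv_re]
        exact div_nonneg (le_of_lt hw) (Complex.normSq_nonneg w)
      rw [Complex.add_re]
      linarith
    -- the key inequality along the positive real axis
    have hineq : ∀ t : ℝ, 0 < t → ‖(κ (t : ℂ)).eval σs‖ ≤ K * ‖(κ (t : ℂ)).eval 0‖ := by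
      intro t ht
      have hre : 0 < ((t : ℂ)).re := by simpa using ht
      have h := ratio_bound (κ (t : ℂ)) ρ hρ (fun σ hσ => hκne (t : ℂ) hre σ hσ) σs
      refine h.trans ?_
      apply mul_le_mul_of_nonneg_right _ (norm_nonneg _)
      rw [hK]
      exact pow_le_pow_right₀ hbase (hκdeg _)
    -- pass to the limit t → 0⁺
    set a : ℕ → ℂ := fun k => MvPolynomial.eval x0 ((Phi l P).coeff k) with ha
    set b : ℕ → ℂ := fun k =>
      MvPolynomial.eval (fun i => x0 i + v i * σs) ((Phi l P).coeff k) with hb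
    have hκ0 : ∀ w : ℂ, (κ w).eval 0 = ∑ k ∈ Finset.range (d + 1), w ^ (d - k) * a k := by
      intro w
      rw [hκeval]
      have hfun : (fun i => x0 i + v i * 0) = x0 := by funext i; ring
      rw [hfun]
    have hκσs : ∀ w : ℂ, (κ w).eval σs = ∑ k ∈ Finset.range (d + 1), w ^ (d - k) * b k :=
      fun w => hκeval w σs
    have hsum0 : ∀ c : ℕ → ℂ,
        (∑ k ∈ Finset.range (d + 1), (0 : ℂ) ^ (d - k) * c k) = c d := by
      intro c
      rw [Finset.sum_eq_single d]
      · simp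
      · intro k hk hkd
        have hklt : k < d := lt_of_le_of_ne (Nat.lt_succ_iff.mp (Finset.mem_range.mp hk)) hkd
        rw [zero_pow (Nat.sub_ne_zero_of_lt hklt), zero_mul]
      · intro h
        exact absurd (Finset.self_mem_range_succ d) h
    have hcont : Continuous (fun t : ℝ =>
        K * ‖∑ k ∈ Finset.range (d + 1), ((t : ℂ)) ^ (d - k) * a k‖
          - ‖∑ k ∈ Finset.range (d + 1), ((t : ℂ)) ^ (d - k) * b k‖) := by
      apply Continuous.sub
      · apply Continuous.mul continuous_const
        apply Continuous.norm
        apply continuous_finset_sum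
        intro k _
        exact ((Complex.continuous_ofReal.pow _).mul continuous_const)
      · apply Continuous.norm
        apply continuous_finset_sum
        intro k _
        exact ((Complex.continuous_ofReal.pow _).mul continuous_const)
    have hF0 : (0:ℝ) ≤ K * ‖∑ k ∈ Finset.range (d + 1), ((0 : ℝ) : ℂ) ^ (d - k) * a k‖
        - ‖∑ k ∈ Finset.range (d + 1), ((0 : ℝ) : ℂ) ^ (d - k) * b k‖ := by
      apply ge_of_tendsto ((hcont.tendsto 0).mono_left
        (nhdsWithin_le_nhds : nhdsWithin (0:ℝ) (Set.Ioi 0) ≤ _))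
      · apply eventually_nhdsWithin_of_forall
        intro t (ht : t ∈ Set.Ioi 0)
        have := hineq t ht
        rw [hκ0, hκσs] at this
        linarith
    rw [Complex.ofReal_zero, hsum0 a, hsum0 b] at hF0
    have had : a d = 0 := hcdx0
    have hbdne : b d ≠ 0 := hbd
    rw [had] at hF0
    simp only [norm_zero, mul_zero] at hF0
    have : ‖b d‖ = 0 := le_antisymm (by linarith) (norm_nonneg _)
    exact hbdne (norm_eq_zero.mp this)
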